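/- For any M > 0, there exist n ≥ 1, d ≥ 1, a matrix V ∈ ℝ^{d×n}, and a nonzero g† ∈ ℝ^d such that: (i) there is x* ∈ {0,1}ⁿ with ‖x*‖₀ = 1 and Vx* = -g†, but (ii) the unique minimizer of F_M(x) = ‖Vx + g†‖₂² + M²·1ᵀx over {0,1}ⁿ is x̂ = 0, which is infeasible for the exact constraint. Concretely, take ‖g†‖₂ = M/2 and v₁ = -g†. -/

import Mathlib

open Finset

theorem no_universal_M_counterexample (M : ℝ) (hM : 0 < M) :
    ∃ (n d : ℕ) (hn : 1 ≤ n) (_ : 1 ≤ d),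
      ∃ (v : Fin n → EuclideanSpace ℝ (Fin d)) (g : EuclideanSpace ℝ (Fin d)),
        g ≠ 0 ∧ ‖g‖ = M / 2 ∧ v ⟨0, hn⟩ = -g ∧
        (∃ xs : Fin n → ℝ, (∀ i, xs i = 0 ∨ xs i = 1) ∧
          (Finset.univ.filter fun i => xs i ≠ 0).card = 1 ∧
          (∑ i, xs i • v i) = -g) ∧
        (∀ x : Fin n → ℝ, (∀ i, x i = 0 ∨ x i = 1) → x ≠ 0 →
          ‖(∑ i : Fin n, (0 : ℝ) • v i) + g‖ ^ 2 + M ^ 2 * ∑ i : Fin n, (0 : ℝ)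
            < ‖(∑ i, x i • v i) + g‖ ^ 2 + M ^ 2 * ∑ i, x i) ∧
        (∑ i : Fin n, (0 : ℝ) • v i) + g ≠ 0 := by
  set g : EuclideanSpace ℝ (Fin 1) := EuclideanSpace.single 0 (M / 2) with hg
  have hgne : g ≠ 0 := by
    intro h
    have := congrArg (fun w : EuclideanSpace ℝ (Fin 1) => w 0) h
    simp [hg, EuclideanSpace.single_apply] at this
    linarith
  have hgnorm : ‖g‖ = M / 2 := by
    rw [hg, EuclideanSpace.norm_single]
    exact Real.norm_of_nonneg (by linarith)
  refine ⟨1, 1, le_refl 1, le_refl 1, (fun _ => -g), g, hgne, hgnorm, rfl, ?_, ?_, ?_⟩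
  · refine ⟨fun _ => 1, fun i => Or.inr rfl, ?_, ?_⟩
    · simp
    · simp
  · intro x hx hxne
    have hx0 : x 0 = 1 := by
      rcases hx 0 with h | h
      · exfalso; apply hxne; funext i; fin_cases i; exact h
      · exact h
    simp only [Fin.sum_univ_one, hx0, zero_smul, zero_add, one_smul]
    have : -g + g = 0 := by abel
    rw [this]
    simp only [norm_zero, Finset.sum_const_zero, mul_zero, add_zero]
    rw [hgnorm]
    nlinarith
  · simp only [Fin.sum_univ_one, zero_smul, zero_add]
    exact hgne
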